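/- arXiv:2602.03267 — 3 statements merged into one kernel-verified Lean document; each statement's English description precedes it below -/
import Mathlib

section
/- The mutual-visibility number of a digraph D with at least one vertex equals the maximum of the mutual-visibility numbers of its strongly connected components (each component considered as an induced subdigraph). -/
variable {V : Type*}

/-- `l` is a directed walk from `u` to `v` in the digraph with arc relation `A`. -/
def IsWalk (A : V → V → Prop) (u v : V) (l : List V) : Prop :=
  l.head? = some u ∧ l.getLast? = some v ∧ l.Chain' A

/-- A directed path: a walk with pairwise distinct vertices. -/
def IsDipath (A : V → V → Prop) (u v : V) (l : List V) : Prop :=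
  IsWalk A u v l ∧ l.Nodup

/-- The internal vertices of a walk given by its vertex list. -/
def internal (l : List V) : List V := l.tail.dropLast

/-- Directed distance: the least number of arcs of a directed walk from `u` to `v`,
`⊤` if there is none. -/
noncomputable def ddist (A : V → V → Prop) (u v : V) : ℕ∞ :=
  sInf {n : ℕ∞ | ∃ l : List V, IsWalk A u v l ∧ (l.length : ℕ∞) = n + 1}

/-- `y` is visible from `x` with respect to `S`: some shortest directed `x,y`-walk
has no internal vertex in `S`. -/
def Visible (A : V → V → Prop) (S : Set V) (x y : V) : Prop :=
  ∃ l : List V, IsWalk A x y l ∧ (l.length : ℕ∞) = ddist A x y + 1 ∧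
    ∀ w ∈ internal l, w ∉ S

/-- `S` is a mutual-visibility set of the digraph with arc relation `A`. -/
def MutVisSet (A : V → V → Prop) (S : Set V) : Prop :=
  ∀ x ∈ S, ∀ y ∈ S, x ≠ y → Visible A S x y ∧ Visible A S y x

/-- The mutual-visibility number. -/
noncomputable def mu (A : V → V → Prop) : ℕ :=
  sSup {n : ℕ | ∃ S : Set V, MutVisSet A S ∧ S.ncard = n}

/-- Reachability by a directed path. -/
def Reach (A : V → V → Prop) : V → V → Prop := Relation.ReflTransGen A

/-- A digraph is strongly connected if every vertex reaches every other. -/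
def StrongConn (A : V → V → Prop) : Prop := ∀ u v : V, Reach A u v

/-- The strongly connected component containing `v`. -/
def scc (A : V → V → Prop) (v : V) : Set V := {u | Reach A u v ∧ Reach A v u}

/-- The mutual-visibility number of the subdigraph induced on `C`. -/
noncomputable def muInduced (A : V → V → Prop) (C : Set V) : ℕ :=
  sSup {n : ℕ | ∃ S : Set V, S ⊆ C ∧
    MutVisSet (fun x y => x ∈ C ∧ y ∈ C ∧ A x y) S ∧ S.ncard = n}


section Helpers

lemma head_reach_mem {A : V → V → Prop} :
    ∀ l : List V, l.Chain' A → ∀ u, l.head? = some u → ∀ w ∈ l, Relation.ReflTransGen A u w := by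
  intro l
  induction l with
  | nil => simp
  | cons a t ih =>
    intro hc u hu w hw
    simp only [List.head?_cons, Option.some.injEq] at hu
    subst hu
    rcases List.mem_cons.mp hw with h | hw
    · subst h; exact Relation.ReflTransGen.refl
    · match t, hc with
      | b :: t', hc =>
        unfold List.Chain' at hc
        rw [List.isChain_cons_cons] at hc
        exact Relation.ReflTransGen.head hc.1 (ih hc.2 b rfl w hw)

lemma mem_reach_last {A : V → V → Prop} :
    ∀ l : List V, l.Chain' A → ∀ v, l.getLast? = some v → ∀ w ∈ l, Relation.ReflTransGen A w v := by
  intro l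
  induction l with
  | nil => simp
  | cons a t ih =>
    intro hc v hv w hw
    match t with
    | [] =>
      simp at hv hw
      subst hv; subst hw
      exact Relation.ReflTransGen.refl
    | b :: t' =>
      rw [List.getLast?_cons_cons] at hv
      unfold List.Chain' at hc
      rw [List.isChain_cons_cons] at hc
      rcases List.mem_cons.mp hw with h | hw
      · subst h; exact Relation.ReflTransGen.head hc.1 (ih hc.2 v hv b (by simp))
      · exact ih hc.2 v hv w hw

lemma reach_of_walk {A : V → V → Prop} {u v : V} {l : List V} (h : IsWalk A u v l) :
    Reach A u v := by
  obtain ⟨h1, h2, h3⟩ := h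
  have hu : u ∈ l := by
    match l, h1 with
    | a :: t, h1 => simp at h1; subst h1; simp
  exact mem_reach_last l h3 v h2 u hu

lemma walk_mem_scc {A : V → V → Prop} {v₀ x y : V} {l : List V}
    (hx : x ∈ scc A v₀) (hy : y ∈ scc A v₀) (h : IsWalk A x y l) :
    ∀ w ∈ l, w ∈ scc A v₀ := by
  intro w hw
  obtain ⟨h1, h2, h3⟩ := h
  have hxw : Reach A x w := head_reach_mem l h3 x h1 w hw
  have hwy : Reach A w y := mem_reach_last l h3 y h2 w hw
  exact ⟨Relation.ReflTransGen.trans hwy hy.1, Relation.ReflTransGen.trans hx.2 hxw⟩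

lemma chain'_restrict {A : V → V → Prop} {C : Set V} :
    ∀ l : List V, l.Chain' A → (∀ w ∈ l, w ∈ C) →
      l.Chain' (fun x y => x ∈ C ∧ y ∈ C ∧ A x y) := by
  intro l
  induction l with
  | nil => exact fun _ _ => List.isChain_nil
  | cons a t ih =>
    intro hc hm
    unfold List.Chain' at hc ⊢
    rw [List.isChain_cons] at hc ⊢
    refine ⟨fun b hb => ⟨hm a (by simp),
      hm b (List.mem_cons_of_mem a (List.mem_of_mem_head? hb)), hc.1 b hb⟩,
      ih hc.2 fun w hw => hm w (List.mem_cons_of_mem a hw)⟩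

lemma walk_restrict_iff {A : V → V → Prop} {v₀ x y : V} {l : List V}
    (hx : x ∈ scc A v₀) (hy : y ∈ scc A v₀) :
    IsWalk (fun a b => a ∈ scc A v₀ ∧ b ∈ scc A v₀ ∧ A a b) x y l ↔ IsWalk A x y l := by
  constructor
  · rintro ⟨h1, h2, h3⟩
    exact ⟨h1, h2, h3.imp fun a b h => h.2.2⟩
  · rintro ⟨h1, h2, h3⟩
    exact ⟨h1, h2, chain'_restrict l h3 (walk_mem_scc hx hy ⟨h1, h2, h3⟩)⟩

lemma ddist_restrict {A : V → V → Prop} {v₀ x y : V}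
    (hx : x ∈ scc A v₀) (hy : y ∈ scc A v₀) :
    ddist (fun a b => a ∈ scc A v₀ ∧ b ∈ scc A v₀ ∧ A a b) x y = ddist A x y := by
  unfold ddist
  congr 1
  ext n
  simp only [Set.mem_setOf_eq]
  constructor <;> rintro ⟨l, hl, hn⟩
  · exact ⟨l, (walk_restrict_iff hx hy).mp hl, hn⟩
  · exact ⟨l, (walk_restrict_iff hx hy).mpr hl, hn⟩

lemma visible_restrict_iff {A : V → V → Prop} {v₀ x y : V} {S : Set V}
    (hx : x ∈ scc A v₀) (hy : y ∈ scc A v₀) :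
    Visible (fun a b => a ∈ scc A v₀ ∧ b ∈ scc A v₀ ∧ A a b) S x y ↔ Visible A S x y := by
  unfold Visible
  rw [ddist_restrict hx hy]
  constructor <;> rintro ⟨l, h1, h2, h3⟩
  · exact ⟨l, (walk_restrict_iff hx hy).mp h1, h2, h3⟩
  · exact ⟨l, (walk_restrict_iff hx hy).mpr h1, h2, h3⟩

lemma reach_of_visible {A : V → V → Prop} {S : Set V} {x y : V}
    (h : Visible A S x y) : Reach A x y := by
  obtain ⟨l, hl, _, _⟩ := h
  exact reach_of_walk hl

end Helpers

/-- μ(D) is the maximum of the mutual-visibility numbers of the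
strongly connected components of D, as induced subdigraphs. -/
theorem stmt6 [Fintype V] [Nonempty V] (A : V → V → Prop) :
    mu A = ⨆ v : V, muInduced A (scc A v) := by
  have hbmu : BddAbove {n : ℕ | ∃ S : Set V, MutVisSet A S ∧ S.ncard = n} := by
    refine ⟨Nat.card V, ?_⟩
    rintro n ⟨S, _, hn⟩
    calc n = S.ncard := hn.symm
    _ ≤ (Set.univ : Set V).ncard := Set.ncard_le_ncard (Set.subset_univ S) Set.finite_univ
    _ = Nat.card V := Set.ncard_univ V
  have hbInd : ∀ C : Set V, BddAbove {n : ℕ | ∃ S : Set V, S ⊆ C ∧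
      MutVisSet (fun x y => x ∈ C ∧ y ∈ C ∧ A x y) S ∧ S.ncard = n} := by
    intro C
    refine ⟨Nat.card V, ?_⟩
    rintro n ⟨S, _, _, hn⟩
    calc n = S.ncard := hn.symm
    _ ≤ (Set.univ : Set V).ncard := Set.ncard_le_ncard (Set.subset_univ S) Set.finite_univ
    _ = Nat.card V := Set.ncard_univ V
  have hrange : BddAbove (Set.range fun v => muInduced A (scc A v)) :=
    Set.Finite.bddAbove (Set.finite_range _)
  have hemptyMV : ∀ B : V → V → Prop, MutVisSet B (∅ : Set V) := by
    intro B x hx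
    exact absurd hx (Set.notMem_empty x)
  apply le_antisymm
  · have hne : ({n : ℕ | ∃ S : Set V, MutVisSet A S ∧ S.ncard = n}).Nonempty :=
      ⟨0, ∅, hemptyMV A, Set.ncard_empty V⟩
    obtain ⟨S, hS, hcard⟩ := Nat.sSup_mem hne hbmu
    rcases S.eq_empty_or_nonempty with rfl | ⟨x₀, hx₀⟩
    · rw [show mu A = sSup {n : ℕ | ∃ S : Set V, MutVisSet A S ∧ S.ncard = n} from rfl,
        ← hcard, Set.ncard_empty]
      exact Nat.zero_le _
    · have hSsub : S ⊆ scc A x₀ := by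
        intro y hy
        by_cases hxy : y = x₀
        · subst hxy; exact ⟨Relation.ReflTransGen.refl, Relation.ReflTransGen.refl⟩
        · obtain ⟨hv1, hv2⟩ := hS y hy x₀ hx₀ hxy
          exact ⟨reach_of_visible hv1, reach_of_visible hv2⟩
      have hMV' : MutVisSet (fun a b => a ∈ scc A x₀ ∧ b ∈ scc A x₀ ∧ A a b) S := by
        intro x hx y hy hxy
        obtain ⟨h1, h2⟩ := hS x hx y hy hxy
        exact ⟨(visible_restrict_iff (hSsub hx) (hSsub hy)).mpr h1,
          (visible_restrict_iff (hSsub hy) (hSsub hx)).mpr h2⟩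
      calc mu A ≤ muInduced A (scc A x₀) := le_csSup (hbInd _) ⟨S, hSsub, hMV', hcard⟩
      _ ≤ ⨆ v : V, muInduced A (scc A v) := le_ciSup hrange x₀
  · apply ciSup_le
    intro v
    have hne : ({n : ℕ | ∃ S : Set V, S ⊆ scc A v ∧
        MutVisSet (fun x y => x ∈ scc A v ∧ y ∈ scc A v ∧ A x y) S ∧ S.ncard = n}).Nonempty :=
      ⟨0, ∅, Set.empty_subset _, hemptyMV _, Set.ncard_empty V⟩
    obtain ⟨S, hsub, hMV, hcard⟩ := Nat.sSup_mem hne (hbInd _)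
    have hMV' : MutVisSet A S := by
      intro x hx y hy hxy
      obtain ⟨h1, h2⟩ := hMV x hx y hy hxy
      exact ⟨(visible_restrict_iff (hsub hx) (hsub hy)).mp h1,
        (visible_restrict_iff (hsub hy) (hsub hx)).mp h2⟩
    exact le_csSup hbmu ⟨S, hMV', hcard⟩
end

section
/- Let q ≡ 3 (mod 4) be a prime power and k ≥ 1 an integer with q > 4k − 5. Then every set S of k vertices of the Paley tournament P_q is a mutual-visibility set; hence μ(P_q) ≥ k. -/
variable {V : Type*}

/-- Arc of the Paley tournament: `u → v` iff `v - u` is a nonzero square. -/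
def paleyArc {F : Type*} [Field F] (u v : F) : Prop :=
  v - u ≠ 0 ∧ IsSquare (v - u)

open Finset

section DdistAux

variable {A : V → V → Prop}

lemma walk_pair {x y : V} (h : A x y) : IsWalk A x y [x, y] := by
  refine ⟨rfl, rfl, ?_⟩
  simp [List.Chain', List.isChain_cons_cons, h]

lemma walk_triple {x w y : V} (h1 : A x w) (h2 : A w y) : IsWalk A x y [x, w, y] := by
  refine ⟨rfl, rfl, ?_⟩
  simp [List.Chain', List.isChain_cons_cons, h1, h2]

lemma ddist_eq_one {x y : V} (hxy : x ≠ y) (h : A x y) : ddist A x y = 1 := by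
  refine le_antisymm (sInf_le ⟨[x, y], walk_pair h, by norm_num⟩) (le_sInf ?_)
  rintro n ⟨l, ⟨hh, hl, -⟩, hlen⟩
  rcases eq_or_ne n ⊤ with rfl | hnt
  · exact le_top
  lift n to ℕ using hnt
  have hlen' : l.length = n + 1 := by exact_mod_cast hlen
  rcases Nat.eq_zero_or_pos n with rfl | hpos
  · obtain ⟨a, rfl⟩ := List.length_eq_one_iff.mp hlen'
    have hx : a = x := by simpa using hh
    have hy : a = y := by simpa using hl
    exact absurd (hx.symm.trans hy) hxy
  · exact_mod_cast hpos

lemma ddist_eq_two {x y w : V} (hxy : x ≠ y) (hA : ¬ A x y) (h1 : A x w) (h2 : A w y) :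
    ddist A x y = 2 := by
  refine le_antisymm (sInf_le ⟨[x, w, y], walk_triple h1 h2, by norm_num⟩) (le_sInf ?_)
  rintro n ⟨l, ⟨hh, hl, hc⟩, hlen⟩
  rcases eq_or_ne n ⊤ with rfl | hnt
  · exact le_top
  lift n to ℕ using hnt
  have hlen' : l.length = n + 1 := by exact_mod_cast hlen
  have h2le : 2 ≤ n := by
    by_contra hlt
    interval_cases n
    · obtain ⟨a, rfl⟩ := List.length_eq_one_iff.mp hlen'
      have ha : a = x := by simpa using hh
      have hay : a = y := by simpa using hl
      exact absurd (ha.symm.trans hay) hxy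
    · obtain ⟨a, b, rfl⟩ := List.length_eq_two.mp hlen'
      have ha : a = x := by simpa using hh
      have hb : b = y := by simpa using hl
      have hab : A a b := (List.isChain_cons_cons.mp hc).1
      exact hA (ha ▸ hb ▸ hab)
  exact_mod_cast h2le

end DdistAux

section PaleyAux

variable {F : Type*} [Field F] [Fintype F] [DecidableEq F]

lemma jacobsthal_sum (hF : ringChar F ≠ 2) {c : F} (hc : c ≠ 0) :
    ∑ u : F, quadraticChar F u * quadraticChar F (u + c) = -1 := by
  have h0 : ∑ u : F, quadraticChar F u * quadraticChar F (u + c)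
      = ∑ u ∈ univ.erase (0 : F), quadraticChar F u * quadraticChar F (u + c) := by
    rw [← Finset.sum_erase_add _ _ (mem_univ (0 : F))]
    simp
  have key : ∑ u ∈ univ.erase (0 : F), quadraticChar F u * quadraticChar F (u + c)
      = ∑ t ∈ univ.erase (1 : F), quadraticChar F t := by
    refine Finset.sum_nbij' (fun u => 1 + c * u⁻¹) (fun t => c * (t - 1)⁻¹) ?_ ?_ ?_ ?_ ?_
    · intro u hu
      simp only [mem_erase, mem_univ, and_true] at hu ⊢
      intro h
      have : c * u⁻¹ = 0 := by linear_combination h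
      rcases mul_eq_zero.mp this with h' | h'
      · exact hc h'
      · exact hu (inv_eq_zero.mp h')
    · intro t ht
      simp only [mem_erase, mem_univ, and_true] at ht ⊢
      intro h
      rcases mul_eq_zero.mp h with h' | h'
      · exact hc h'
      · exact ht (by rw [inv_eq_zero, sub_eq_zero] at h'; exact h')
    · intro u hu
      simp only [mem_erase, mem_univ, and_true] at hu
      field_simp
      simp [hc]
    · intro t ht
      simp only [mem_erase, mem_univ, and_true] at ht
      have h1 : t - 1 ≠ 0 := sub_ne_zero.mpr ht
      field_simp
      ring
    · intro u hu
      simp only [mem_erase, mem_univ, and_true] at hu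
      have : u + c = u * (1 + c * u⁻¹) := by field_simp
      rw [this, map_mul, ← mul_assoc, ← pow_two, quadraticChar_sq_one hu, one_mul]
  rw [h0, key]
  have h1 := Finset.sum_erase_add univ (fun t => quadraticChar F t) (mem_univ (1 : F))
  rw [quadraticChar_sum_zero hF] at h1
  have h2 : (quadraticChar F) (1 : F) = 1 := map_one _
  linarith

lemma paley_count (hF : ringChar F ≠ 2) (hns : ¬ IsSquare (-1 : F)) (x y : F)
    [DecidablePred (fun w : F => paleyArc y w ∧ paleyArc w x)]
    (hxy : quadraticChar F (x - y) = -1) :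
    (4 : ℤ) * (univ.filter (fun w => paleyArc y w ∧ paleyArc w x)).card
      = Fintype.card F + 1 := by
  set χ := quadraticChar F with hχ
  have hne : x ≠ y := by
    intro h; rw [h, sub_self, hχ, quadraticChar_zero] at hxy; norm_num at hxy
  have hneg : χ (-1 : F) = -1 := quadraticChar_neg_one_iff_not_isSquare.mpr hns
  -- key pointwise identity
  have hpt : ∀ w : F, (1 + χ (w - y)) * (1 + χ (x - w))
      = if paleyArc y w ∧ paleyArc w x then 4 else 0 := by
    intro w
    rcases eq_or_ne w y with rfl | hwy
    · rw [sub_self, hχ, quadraticChar_zero, ← hχ, hxy]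
      have : ¬ (paleyArc w w ∧ paleyArc w x) := by
        rintro ⟨⟨h, -⟩, -⟩; exact h (sub_self w)
      rw [if_neg this]; ring
    · rcases eq_or_ne w x with rfl | hwx
      · rw [sub_self, hχ, quadraticChar_zero, ← hχ, hxy]
        have : ¬ (paleyArc y w ∧ paleyArc w w) := by
          rintro ⟨-, ⟨h, -⟩⟩; exact h (sub_self w)
        rw [if_neg this]; ring
      · have hwy' : w - y ≠ 0 := sub_ne_zero.mpr hwy
        have hxw' : x - w ≠ 0 := sub_ne_zero.mpr (Ne.symm hwx)
        by_cases h1 : IsSquare (w - y)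
        · by_cases h2 : IsSquare (x - w)
          · rw [if_pos ⟨⟨hwy', h1⟩, ⟨hxw', h2⟩⟩,
              (quadraticChar_one_iff_isSquare hwy').mpr h1,
              (quadraticChar_one_iff_isSquare hxw').mpr h2]
            norm_num
          · rw [if_neg (by rintro ⟨-, ⟨-, h⟩⟩; exact h2 h),
              quadraticChar_neg_one_iff_not_isSquare.mpr h2]
            ring
        · rw [if_neg (by rintro ⟨⟨-, h⟩, -⟩; exact h1 h),
            quadraticChar_neg_one_iff_not_isSquare.mpr h1]
          ring
  have hsum : ∑ w : F, (1 + χ (w - y)) * (1 + χ (x - w))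
      = 4 * (univ.filter (fun w => paleyArc y w ∧ paleyArc w x)).card := by
    rw [Finset.sum_congr rfl (fun w _ => hpt w), Finset.sum_ite, Finset.sum_const,
      Finset.sum_const_zero, add_zero, nsmul_eq_mul, mul_comm]
  -- evaluate the left sum
  have e1 : ∑ w : F, χ (w - y) = 0 := by
    have h := Fintype.sum_equiv (Equiv.subRight y) (fun w => χ (w - y)) (fun a => χ a)
      (fun w => by simp)
    rw [h]; exact quadraticChar_sum_zero hF
  have e2 : ∑ w : F, χ (x - w) = 0 := by
    have h := Fintype.sum_equiv (Equiv.subLeft x) (fun w => χ (x - w)) (fun a => χ a)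
      (fun w => by simp)
    rw [h]; exact quadraticChar_sum_zero hF
  have e3 : ∑ w : F, χ (w - y) * χ (x - w) = 1 := by
    have hre : ∑ w : F, χ (w - y) * χ (x - w)
        = ∑ u : F, χ u * χ ((x - y) - u) := by
      refine (Fintype.sum_equiv (Equiv.addRight y) _ _ ?_).symm
      intro u
      simp only [Equiv.coe_addRight, add_sub_cancel_right]
      ring_nf
    have hstep : ∀ u : F, χ ((x - y) - u) = - χ (u + (-(x - y))) := by
      intro u
      have : (x - y) - u = (-1) * (u + (-(x - y))) := by ring
      rw [this, map_mul, hneg]; ring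
    have hc' : -(x - y) ≠ 0 := by
      simp only [neg_ne_zero, sub_ne_zero]; exact hne
    calc ∑ w : F, χ (w - y) * χ (x - w)
        = ∑ u : F, χ u * χ ((x - y) - u) := hre
      _ = ∑ u : F, -(χ u * χ (u + (-(x - y)))) := by
          refine Finset.sum_congr rfl fun u _ => ?_; rw [hstep u]; ring
      _ = -∑ u : F, χ u * χ (u + (-(x - y))) := by rw [Finset.sum_neg_distrib]
      _ = 1 := by rw [jacobsthal_sum hF hc']; ring
  have expand : ∑ w : F, (1 + χ (w - y)) * (1 + χ (x - w))
      = (Fintype.card F : ℤ) + (∑ w : F, χ (w - y)) + (∑ w : F, χ (x - w))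
        + ∑ w : F, χ (w - y) * χ (x - w) := by
    rw [show ((Fintype.card F : ℤ)) = ∑ _w : F, (1 : ℤ) by simp [Finset.card_univ]]
    rw [← Finset.sum_add_distrib, ← Finset.sum_add_distrib, ← Finset.sum_add_distrib]
    exact Finset.sum_congr rfl fun w _ => by ring
  rw [← hsum, expand, e1, e2, e3]
  ring

end PaleyAux

/-- If `q ≡ 3 (mod 4)` and `q > 4k − 5`, every `k`-element vertex
set of the Paley tournament `P_q` is a mutual-visibility set; hence `μ(P_q) ≥ k`. -/
theorem stmt14 (F : Type*) [Field F] [Fintype F]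
    (q k : ℕ) (hq : Fintype.card F = q) (hq4 : q % 4 = 3)
    (hk : 1 ≤ k) (hqk : (4 * k : ℤ) - 5 < (q : ℤ)) :
    (∀ S : Set F, S.ncard = k → MutVisSet (fun u v : F => paleyArc u v) S) ∧
    k ≤ mu (fun u v : F => paleyArc u v) := by
  classical
  set A : F → F → Prop := fun u v => paleyArc u v with hA
  have hF2 : ringChar F ≠ 2 := by
    intro h
    have := FiniteField.even_card_iff_char_two.mp h
    rw [hq] at this; omega
  have hns : ¬ IsSquare (-1 : F) := by
    rw [FiniteField.isSquare_neg_one_iff, hq]; omega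
  have hneg : quadraticChar F (-1 : F) = -1 :=
    quadraticChar_neg_one_iff_not_isSquare.mpr hns
  -- arc x y implies χ (x - y) = -1
  have harc : ∀ {x y : F}, paleyArc x y → quadraticChar F (x - y) = -1 := by
    rintro x y ⟨h0, hsq⟩
    have : (x - y) = (-1) * (y - x) := by ring
    rw [this, map_mul, hneg, (quadraticChar_one_iff_isSquare h0).mpr hsq]
    norm_num
  have hnoarc : ∀ {x y : F}, paleyArc x y → ¬ paleyArc y x := by
    intro x y h h'
    have h1 := harc h
    rw [(quadraticChar_one_iff_isSquare h'.1).mpr h'.2] at h1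
    norm_num at h1
  have htri : ∀ {x y : F}, x ≠ y → paleyArc x y ∨ paleyArc y x := by
    intro x y hne
    have h0 : y - x ≠ 0 := sub_ne_zero.mpr (Ne.symm hne)
    by_cases h : IsSquare (y - x)
    · exact Or.inl ⟨h0, h⟩
    · right
      refine ⟨sub_ne_zero.mpr hne, ?_⟩
      by_contra h'
      have h1 := quadraticChar_neg_one_iff_not_isSquare.mpr h
      have h2 := quadraticChar_neg_one_iff_not_isSquare.mpr h'
      have : (x - y) = (-1) * (y - x) := by ring
      rw [this, map_mul, hneg, h1] at h2
      norm_num at h2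
  have main : ∀ S : Set F, S.ncard = k → ∀ x ∈ S, ∀ y ∈ S, paleyArc x y →
      Visible A S x y ∧ Visible A S y x := by
    intro S hS x hx y hy hxy
    have hne : x ≠ y := by
      intro h; rw [h] at hxy; exact hxy.1 (sub_self y)
    -- forward visibility via the arc
    have vis1 : Visible A S x y := by
      refine ⟨[x, y], walk_pair hxy, ?_, ?_⟩
      · rw [ddist_eq_one hne hxy]; norm_num
      · intro w hw; simp [internal] at hw
    -- backward: find w ∉ S with y → w → x
    set W : Finset F := univ.filter (fun w => paleyArc y w ∧ paleyArc w x) with hW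
    have hcount := paley_count hF2 hns x y (harc hxy)
    rw [hq] at hcount
    have hSfin : S.Finite := Set.toFinite S
    have hwex : ∃ w ∈ W, w ∉ S := by
      by_contra hcon
      push_neg at hcon
      have hsub : (↑W : Set F) ⊆ S \ {x, y} := by
        intro w hw
        simp only [hW, coe_filter, Set.mem_setOf_eq, mem_univ, true_and] at hw
        refine ⟨hcon w (by simp [hW, hw.1, hw.2]), ?_⟩
        simp only [Set.mem_insert_iff, Set.mem_singleton_iff]
        rintro (rfl | rfl)
        · exact hnoarc hxy hw.1
        · exact hw.1.1 (sub_self w)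
      have hpairsub : ({x, y} : Set F) ⊆ S := by
        rintro z (rfl | rfl); exact hx; exact hy
      have hk2 : ({x, y} : Set F).ncard = 2 := Set.ncard_pair hne
      have hdiff : (S \ {x, y}).ncard = k - 2 := by
        rw [Set.ncard_diff hpairsub, hk2, hS]
      have hle : W.card ≤ k - 2 := by
        rw [← Set.ncard_coe_finset W, ← hdiff]
        exact Set.ncard_le_ncard hsub hSfin.diff
      have hk2' : 2 ≤ k := by
        rw [← hS]
        calc 2 = ({x, y} : Set F).ncard := hk2.symm
          _ ≤ S.ncard := Set.ncard_le_ncard hpairsub hSfin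
      rw [← hW] at hcount
      omega
    obtain ⟨w, hwW, hwS⟩ := hwex
    simp only [hW, mem_filter, mem_univ, true_and] at hwW
    have vis2 : Visible A S y x := by
      refine ⟨[y, w, x], walk_triple hwW.1 hwW.2, ?_, ?_⟩
      · rw [ddist_eq_two (Ne.symm hne) (hnoarc hxy) hwW.1 hwW.2]; norm_num
      · intro z hz
        simp only [internal, List.tail_cons, List.dropLast] at hz
        simp only [List.mem_singleton] at hz
        subst hz; exact hwS
    exact ⟨vis1, vis2⟩
  have part1 : ∀ S : Set F, S.ncard = k → MutVisSet A S := by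
    intro S hS x hx y hy hne
    rcases htri hne with h | h
    · exact main S hS x hx y hy h
    · exact ⟨(main S hS y hy x hx h).2, (main S hS y hy x hx h).1⟩
  refine ⟨part1, ?_⟩
  -- existence of a k-set
  have hcard : k ≤ Fintype.card F := by
    have h1 : 1 ≤ Fintype.card F := Fintype.card_pos
    rw [hq] at *
    omega
  obtain ⟨T, -, hT⟩ := Finset.exists_subset_card_eq (Finset.card_univ (α := F) ▸ hcard)
  have hTset : (↑T : Set F).ncard = k := by rw [Set.ncard_coe_finset, hT]
  have hmem : k ∈ {n : ℕ | ∃ S : Set F, MutVisSet A S ∧ S.ncard = n} :=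
    ⟨↑T, part1 _ hTset, hTset⟩
  have hbdd : BddAbove {n : ℕ | ∃ S : Set F, MutVisSet A S ∧ S.ncard = n} := by
    refine ⟨Fintype.card F, ?_⟩
    rintro n ⟨S, -, rfl⟩
    calc S.ncard ≤ (Set.univ : Set F).ncard :=
          Set.ncard_le_ncard (Set.subset_univ S) Set.finite_univ
      _ = Fintype.card F := by rw [Set.ncard_univ, Nat.card_eq_fintype_card]
  exact le_csSup hbdd hmem
end

section
/- For every integer k ≥ 1 there exists a tournament T with mutual-visibility number μ(T) ≥ k. -/
variable {V : Type*}

section Aux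

variable {A : V → V → Prop}

lemma isWalk_pair {u v : V} (h : A u v) : IsWalk A u v [u, v] :=
  ⟨rfl, rfl, by simp [List.Chain', List.isChain_cons_cons, h]⟩

lemma isWalk_triple {u z v : V} (h1 : A u z) (h2 : A z v) : IsWalk A u v [u, z, v] :=
  ⟨rfl, rfl, by simp [List.Chain', List.isChain_cons_cons, h1, h2]⟩

lemma walk_len_ge_one {u v : V} {l : List V} (h : IsWalk A u v l) : 1 ≤ l.length := by
  obtain ⟨h1, -, -⟩ := h
  cases l with
  | nil => simp at h1
  | cons a t => simp

lemma walk_len_ne_one {u v : V} {l : List V} (h : IsWalk A u v l) (huv : u ≠ v) :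
    l.length ≠ 1 := by
  intro hlen
  obtain ⟨h1, h2, -⟩ := h
  match l, hlen with
  | [a], _ =>
    simp only [List.head?_cons, List.getLast?_singleton, Option.some_inj] at h1 h2
    exact huv (h1.symm.trans h2)

lemma walk_len_ne_two {u v : V} {l : List V} (h : IsWalk A u v l) (hA : ¬ A u v) :
    l.length ≠ 2 := by
  intro hlen
  obtain ⟨h1, h2, h3⟩ := h
  match l, hlen with
  | [a, b], _ =>
    simp only [List.head?_cons, Option.some_inj] at h1
    have h2' : b = v := by simpa using h2
    have : A a b := by simpa [List.Chain', List.isChain_cons_cons] using h3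
    exact hA (h1 ▸ h2' ▸ this)

lemma ddist_eq_one_s15 {u v : V} (huv : u ≠ v) (h : A u v) : ddist A u v = 1 := by
  refine le_antisymm (sInf_le ⟨[u, v], isWalk_pair h, by norm_num⟩) (le_sInf ?_)
  rintro n ⟨l, hw, hlen⟩
  have h1 := walk_len_ge_one hw
  have h2 := walk_len_ne_one hw huv
  cases n with
  | top => exact le_top
  | coe m =>
    have : (l.length : ℕ∞) = ((m + 1 : ℕ) : ℕ∞) := by push_cast; exact hlen
    have hl : l.length = m + 1 := Nat.cast_injective this
    have : 1 ≤ m := by omega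
    exact_mod_cast this

lemma ddist_eq_two_s15 {u v z : V} (huv : u ≠ v) (hA : ¬ A u v)
    (h1 : A u z) (h2 : A z v) : ddist A u v = 2 := by
  refine le_antisymm (sInf_le ⟨[u, z, v], isWalk_triple h1 h2, by norm_num⟩) (le_sInf ?_)
  rintro n ⟨l, hw, hlen⟩
  have g1 := walk_len_ge_one hw
  have g2 := walk_len_ne_one hw huv
  have g3 := walk_len_ne_two hw hA
  cases n with
  | top => exact le_top
  | coe m =>
    have : (l.length : ℕ∞) = ((m + 1 : ℕ) : ℕ∞) := by push_cast; exact hlen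
    have hl : l.length = m + 1 := Nat.cast_injective this
    have : 2 ≤ m := by omega
    exact_mod_cast this

lemma visible_of_arc (S : Set V) {u v : V} (huv : u ≠ v) (h : A u v) :
    Visible A S u v :=
  ⟨[u, v], isWalk_pair h, by rw [ddist_eq_one_s15 huv h]; norm_num, by simp [internal]⟩

lemma visible_of_two (S : Set V) {u v z : V} (huv : u ≠ v) (hA : ¬ A u v)
    (h1 : A u z) (h2 : A z v) (hz : z ∉ S) : Visible A S u v := by
  refine ⟨[u, z, v], isWalk_triple h1 h2,
    by rw [ddist_eq_two_s15 huv hA h1 h2]; norm_num, ?_⟩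
  intro w hw
  have : w = z := by simpa [internal] using hw
  exact this ▸ hz

end Aux

/-- The arc relation of the tournament used in the proof of `stmt15`. -/
def Arc (k : ℕ) : (Fin k ⊕ Fin k × Fin k) → (Fin k ⊕ Fin k × Fin k) → Prop
  | .inl i, .inl j => i < j
  | .inl m, .inr p => m ≠ p.1
  | .inr p, .inl m => m = p.1
  | .inr p, .inr q => p.1.val * k + p.2.val < q.1.val * k + q.2.val

/-- For every `k ≥ 1` there is a tournament `T` with `μ(T) ≥ k`. -/
theorem stmt15 (k : ℕ) (hk : 1 ≤ k) :
    ∃ (V : Type) (_ : Fintype V) (A : V → V → Prop),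
      (∀ v : V, ¬ A v v) ∧
      (∀ u v : V, u ≠ v → (A u v ↔ ¬ A v u)) ∧
      k ≤ mu A := by
  refine ⟨Fin k ⊕ Fin k × Fin k, inferInstance, Arc k, ?_, ?_, ?_⟩
  · rintro (i | p) <;> simp [Arc]
  · rintro (i | p) (j | q) huv
    · have hij : i ≠ j := fun h => huv (by rw [h])
      constructor
      · intro h h'
        exact absurd (lt_trans h h') (lt_irrefl i)
      · intro h
        rcases lt_or_gt_of_ne hij with h' | h'
        · exact h'
        · exact absurd h' h
    · simp only [Arc]
    · simp only [Arc]
      simp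
    · simp only [Arc]
      have hpq : p ≠ q := fun h => huv (by rw [h])
      have hne : p.1.val * k + p.2.val ≠ q.1.val * k + q.2.val := by
        intro h
        apply hpq
        have hp2 := p.2.isLt
        have hq2 := q.2.isLt
        have e1 : p.1.val = q.1.val := by
          rcases lt_trichotomy p.1.val q.1.val with h' | h' | h'
          · nlinarith
          · exact h'
          · nlinarith
        have e2 : p.2.val = q.2.val := by rw [e1] at h; omega
        exact Prod.ext (Fin.ext e1) (Fin.ext e2)
      revert hne
      generalize p.1.val * k + p.2.val = a
      generalize q.1.val * k + q.2.val = b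
      intro hne
      omega
  · -- k ≤ mu (Arc k)
    set S : Set (Fin k ⊕ Fin k × Fin k) := Set.range Sum.inl with hS
    have hvis : ∀ i j : Fin k, i < j →
        Visible (Arc k) S (Sum.inl i) (Sum.inl j) ∧
        Visible (Arc k) S (Sum.inl j) (Sum.inl i) := by
      intro i j hij
      have hne : (Sum.inl i : Fin k ⊕ Fin k × Fin k) ≠ Sum.inl j := by
        simp [Fin.ne_of_lt hij]
      have hne' : (Sum.inl j : Fin k ⊕ Fin k × Fin k) ≠ Sum.inl i := Ne.symm hne
      constructor
      · exact visible_of_arc S hne hij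
      · refine visible_of_two S hne' (by simpa [Arc] using not_lt_of_gt hij)
          (z := Sum.inr (i, j)) ?_ ?_ ?_
        · show j ≠ i
          exact Fin.ne_of_gt hij
        · show i = i
          rfl
        · rintro ⟨w, hw⟩
          exact Sum.inl_ne_inr hw
    have hmvs : MutVisSet (Arc k) S := by
      rintro x ⟨i, rfl⟩ y ⟨j, rfl⟩ hxy
      have hij : i ≠ j := fun h => hxy (by rw [h])
      rcases lt_or_gt_of_ne hij with h | h
      · exact hvis i j h
      · exact (hvis j i h).symm
    have hcard : S.ncard = k := by
      rw [hS, ← Set.image_univ, Set.ncard_image_of_injective _ Sum.inl_injective,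
        Set.ncard_univ]
      simp
    have hbdd : BddAbove {n : ℕ | ∃ T : Set (Fin k ⊕ Fin k × Fin k),
        MutVisSet (Arc k) T ∧ T.ncard = n} := by
      refine ⟨Fintype.card (Fin k ⊕ Fin k × Fin k), ?_⟩
      rintro n ⟨T, -, rfl⟩
      calc T.ncard ≤ (Set.univ : Set (Fin k ⊕ Fin k × Fin k)).ncard :=
            Set.ncard_le_ncard (Set.subset_univ T) Set.finite_univ
        _ = Fintype.card (Fin k ⊕ Fin k × Fin k) := by
            rw [Set.ncard_univ, Nat.card_eq_fintype_card]
    exact le_csSup hbdd ⟨S, hmvs, hcard⟩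
end
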